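/- For every integer n ≥ 1 and every (y,z) ∈ ℝ × ℝ^d one has g_n(y,z) ≤ g_{n+1}(y,z) ≤ g(y,z) and |g_n(y,z) − g(y,0)| ≤ λ·(f + |y| + ‖z‖^α). -/

import Mathlib

open Filter Topology

/-- The inf-convolution `g_n(y,z) := inf_{u ∈ ℝ^d} ( g(y,u) + (n+λ)·‖u − z‖^α )`. -/
noncomputable def gseq (d : ℕ) (lam α : ℝ) (g : ℝ → EuclideanSpace ℝ (Fin d) → ℝ)
    (n : ℕ) (y : ℝ) (z : EuclideanSpace ℝ (Fin d)) : ℝ :=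
  ⨅ u : EuclideanSpace ℝ (Fin d), (g y u + ((n : ℝ) + lam) * ‖u - z‖ ^ α)

lemma add_rpow_le_aux {α : ℝ} (hα0 : 0 ≤ α) (hα1 : α ≤ 1) {a b : ℝ}
    (ha : 0 ≤ a) (hb : 0 ≤ b) : (a + b) ^ α ≤ a ^ α + b ^ α := by
  lift a to NNReal using ha
  lift b to NNReal using hb
  have := NNReal.rpow_add_le_add_rpow a b hα0 hα1
  exact_mod_cast this

/-- For every integer `n ≥ 1` and every `(y,z)`,
`g_n(y,z) ≤ g_{n+1}(y,z) ≤ g(y,z)` and `|g_n(y,z) − g(y,0)| ≤ λ·(f + |y| + ‖z‖^α)`. -/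
theorem stmt_1 (d : ℕ) (hd : 1 ≤ d) (lam α f : ℝ) (hlam : 0 < lam)
    (hα : 0 < α ∧ α < 1) (hf : 0 ≤ f)
    (g : ℝ → EuclideanSpace ℝ (Fin d) → ℝ)
    (H4 : ∀ (y : ℝ) (z : EuclideanSpace ℝ (Fin d)),
      |g y z - g y 0| ≤ lam * (f + |y| + ‖z‖ ^ α))
    (n : ℕ) (hn : 1 ≤ n) (y : ℝ) (z : EuclideanSpace ℝ (Fin d)) :
    gseq d lam α g n y z ≤ gseq d lam α g (n + 1) y z ∧
    gseq d lam α g (n + 1) y z ≤ g y z ∧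
    |gseq d lam α g n y z - g y 0| ≤ lam * (f + |y| + ‖z‖ ^ α) := by
  obtain ⟨hα0, hα1⟩ := hα
  -- lower bound for each term, for any m : ℕ
  have key : ∀ (m : ℕ) (u : EuclideanSpace ℝ (Fin d)),
      g y 0 - lam * (f + |y| + ‖z‖ ^ α) ≤ g y u + ((m : ℝ) + lam) * ‖u - z‖ ^ α := by
    intro m u
    have h1 : g y 0 - g y u ≤ lam * (f + |y| + ‖u‖ ^ α) := by
      have := H4 y u
      have := abs_le.mp this
      linarith [this.1]
    have hu : ‖u‖ ^ α ≤ ‖u - z‖ ^ α + ‖z‖ ^ α := by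
      have h2 : ‖u‖ ≤ ‖u - z‖ + ‖z‖ := by
        calc ‖u‖ = ‖(u - z) + z‖ := by rw [sub_add_cancel]
          _ ≤ ‖u - z‖ + ‖z‖ := norm_add_le _ _
      calc ‖u‖ ^ α ≤ (‖u - z‖ + ‖z‖) ^ α :=
            Real.rpow_le_rpow (norm_nonneg _) h2 hα0.le
        _ ≤ ‖u - z‖ ^ α + ‖z‖ ^ α :=
            add_rpow_le_aux hα0.le hα1.le (norm_nonneg _) (norm_nonneg _)
    have hmn : lam * ‖u - z‖ ^ α ≤ ((m : ℝ) + lam) * ‖u - z‖ ^ α := by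
      apply mul_le_mul_of_nonneg_right _ (Real.rpow_nonneg (norm_nonneg _) _)
      have : (0 : ℝ) ≤ (m : ℝ) := Nat.cast_nonneg m
      linarith
    nlinarith [Real.rpow_nonneg (norm_nonneg (u - z)) α, hlam.le]
  have hbdd : ∀ m : ℕ, BddBelow (Set.range fun u : EuclideanSpace ℝ (Fin d) =>
      g y u + ((m : ℝ) + lam) * ‖u - z‖ ^ α) := by
    intro m
    exact ⟨g y 0 - lam * (f + |y| + ‖z‖ ^ α), by rintro x ⟨u, rfl⟩; exact key m u⟩
  -- upper bound: value at u = z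
  have hupper : ∀ m : ℕ, gseq d lam α g m y z ≤ g y z := by
    intro m
    have := ciInf_le (hbdd m) z
    simpa [gseq, sub_self, Real.zero_rpow (ne_of_gt hα0)] using this
  have hlower : ∀ m : ℕ, g y 0 - lam * (f + |y| + ‖z‖ ^ α) ≤ gseq d lam α g m y z := by
    intro m
    exact le_ciInf (key m)
  refine ⟨?_, hupper (n + 1), ?_⟩
  · apply ciInf_mono (hbdd n)
    intro u
    have : ((n : ℝ)) ≤ ((n : ℝ) + 1) := by linarith
    have := mul_le_mul_of_nonneg_right (by push_cast; linarith :
      ((n : ℝ) + lam) ≤ (((n + 1 : ℕ) : ℝ) + lam)) (Real.rpow_nonneg (norm_nonneg (u - z)) α)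
    linarith
  · rw [abs_le]
    constructor
    · have := hlower n; linarith
    · have h1 := hupper n
      have h2 := abs_le.mp (H4 y z)
      linarith [h2.2]
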